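/- arXiv:2104.03826 — 11 statements merged into one kernel-verified Lean document; each statement's English description precedes it below -/
import Mathlib

section
/- Let F : 𝒜 → ℬ be a fully faithful left exact covariant functor between abelian categories whose essential image is closed under direct summands. If F(N) is F(M)-CS-Rickart in ℬ, then N is M-CS-Rickart in 𝒜. -/
open CategoryTheory CategoryTheory.Limits

universe v u v₂ u₂

/-- A monomorphism `f` is essential if every `h` with `f ≫ h` mono is mono. -/
def EssentialMono {C : Type u} [Category.{v} C] {M N : C} (f : M ⟶ N) : Prop :=
  Mono f ∧ ∀ ⦃P : C⦄ (h : N ⟶ P), Mono (f ≫ h) → Mono h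

/-- An epimorphism `f` is superfluous if every `h` with `h ≫ f` epi is epi. -/
def SuperfluousEpi {C : Type u} [Category.{v} C] {M N : C} (f : M ⟶ N) : Prop :=
  Epi f ∧ ∀ ⦃P : C⦄ (h : P ⟶ M), Epi (h ≫ f) → Epi h

/-- `CSRickart M N` : `N` is `M`-CS-Rickart. -/
def CSRickart {C : Type u} [Category.{v} C] [Abelian C] (M N : C) : Prop :=
  ∀ f : M ⟶ N, ∃ (L : C) (e : kernel f ⟶ L) (s : L ⟶ M),
    EssentialMono e ∧ (∃ retr : M ⟶ L, s ≫ retr = 𝟙 L) ∧ e ≫ s = kernel.ι f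

/-- `DualCSRickart M N` : `N` is dual `M`-CS-Rickart. -/
def DualCSRickart {C : Type u} [Category.{v} C] [Abelian C] (M N : C) : Prop :=
  ∀ f : M ⟶ N, ∃ (P : C) (r : N ⟶ P) (t : P ⟶ cokernel f),
    (∃ sec : P ⟶ N, sec ≫ r = 𝟙 P) ∧ SuperfluousEpi t ∧ r ≫ t = cokernel.π f

theorem csRickart_reflect_of_fullyFaithful_leftExact_summandClosed
    {A : Type u} [Category.{v} A] [Abelian A] {B : Type u₂} [Category.{v₂} B] [Abelian B]
    (F : A ⥤ B) [F.Full] [F.Faithful] [PreservesFiniteLimits F]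
    (hclosed : ∀ ⦃X Y : B⦄ (s : X ⟶ Y) (r : Y ⟶ X),
      s ≫ r = 𝟙 X → F.essImage Y → F.essImage X)
    (M N : A) (h : CSRickart (F.obj M) (F.obj N)) : CSRickart M N := by
  intro f
  obtain ⟨L, e, s, ⟨heM, heE⟩, ⟨retr, hret⟩, hes⟩ := h (F.map f)
  have hL : F.essImage L := hclosed s retr hret ⟨M, ⟨Iso.refl _⟩⟩
  obtain ⟨L₀, ⟨iso⟩⟩ := hL
  have hκ : IsIso (kernelComparison f F) := inferInstance
  set κ := kernelComparison f F with hκdef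
  let e' : kernel f ⟶ L₀ := F.preimage (κ ≫ e ≫ iso.inv)
  let s' : L₀ ⟶ M := F.preimage (iso.hom ≫ s)
  have hFe' : F.map e' = κ ≫ e ≫ iso.inv := F.map_preimage _
  have hFs' : F.map s' = iso.hom ≫ s := F.map_preimage _
  refine ⟨L₀, e', s', ⟨?_, ?_⟩, ⟨F.preimage (retr ≫ iso.inv), ?_⟩, ?_⟩
  · -- Mono e'
    have : Mono (F.map e') := by
      rw [hFe']
      exact mono_comp _ _
    exact F.mono_of_mono_map this
  · -- essential
    intro P g hg
    have : Mono (F.map (e' ≫ g)) := F.map_mono _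
    rw [F.map_comp, hFe'] at this
    have h1 : Mono (e ≫ iso.inv ≫ F.map g) := by
      haveI h0 : Mono (κ ≫ e ≫ iso.inv ≫ F.map g) := by simpa [Category.assoc] using this
      have heq : inv κ ≫ κ ≫ e ≫ iso.inv ≫ F.map g = e ≫ iso.inv ≫ F.map g := by simp
      rw [← heq]
      exact mono_comp _ _
    have h2 : Mono (iso.inv ≫ F.map g) := heE _ h1
    have h3 : Mono (F.map g) := by
      have := mono_comp iso.hom (iso.inv ≫ F.map g)
      simpa using this
    exact F.mono_of_mono_map h3
  · -- section
    apply F.map_injective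
    rw [F.map_comp, hFs', F.map_preimage, F.map_id]
    slice_lhs 2 3 => rw [hret]
    simp
  · -- e' ≫ s' = kernel.ι f
    apply F.map_injective
    rw [F.map_comp, hFe', hFs']
    simp [hκdef, hes]
end

section
/- Let F : 𝒜 → ℬ be a fully faithful right exact covariant functor between abelian categories whose essential image is closed under direct summands. If F(N) is dual F(M)-CS-Rickart in ℬ, then N is dual M-CS-Rickart in 𝒜. -/
open CategoryTheory CategoryTheory.Limits

universe v u v₂ u₂

theorem dualCSRickart_reflect_of_fullyFaithful_rightExact_summandClosed
    {A : Type u} [Category.{v} A] [Abelian A] {B : Type u₂} [Category.{v₂} B] [Abelian B]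
    (F : A ⥤ B) [F.Full] [F.Faithful] [PreservesFiniteColimits F]
    (hclosed : ∀ ⦃X Y : B⦄ (s : X ⟶ Y) (r : Y ⟶ X),
      s ≫ r = 𝟙 X → F.essImage Y → F.essImage X)
    (M N : A) (h : DualCSRickart (F.obj M) (F.obj N)) : DualCSRickart M N := by

  intro f
  obtain ⟨P, r, t, ⟨sec, hsec⟩, ⟨ht_epi, ht_sup⟩, hrt⟩ := h (F.map f)
  have hP : F.essImage P := hclosed sec r hsec ⟨N, ⟨Iso.refl _⟩⟩
  obtain ⟨P₀, ⟨σ⟩⟩ := hP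
  haveI : IsIso (cokernelComparison f F) := inferInstance
  haveI : F.PreservesEpimorphisms := inferInstance
  refine ⟨P₀, F.preimage (r ≫ σ.inv), F.preimage (σ.hom ≫ t ≫ cokernelComparison f F),
    ⟨F.preimage (σ.hom ≫ sec), ?_⟩, ⟨?_, ?_⟩, ?_⟩
  · apply F.map_injective
    simp [reassoc_of% hsec]
  · -- Epi
    apply F.epi_of_epi_map
    rw [F.map_preimage]
    exact epi_comp _ _
  · -- superfluous
    intro Q g hg
    apply F.epi_of_epi_map
    have h1 : Epi (F.map g ≫ σ.hom ≫ t ≫ cokernelComparison f F) := by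
      have := F.map_epi (g ≫ F.preimage (σ.hom ≫ t ≫ cokernelComparison f F))
      rwa [F.map_comp, F.map_preimage] at this
    have h2 : Epi ((F.map g ≫ σ.hom) ≫ t) := by
      haveI := h1
      have e : (F.map g ≫ σ.hom ≫ t ≫ cokernelComparison f F) ≫
          inv (cokernelComparison f F) = (F.map g ≫ σ.hom) ≫ t := by simp
      rw [← e]; exact epi_comp _ _
    haveI h3 : Epi (F.map g ≫ σ.hom) := ht_sup _ h2
    rw [show F.map g = (F.map g ≫ σ.hom) ≫ σ.inv by simp]
    exact epi_comp _ _
  · apply F.map_injective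
    rw [F.map_comp, F.map_preimage, F.map_preimage]
    simp only [Category.assoc, Iso.inv_hom_id_assoc]
    rw [← Category.assoc, hrt, π_comp_cokernelComparison]
end

section
/- Let (L, R) be an adjoint pair with L : 𝒜 → ℬ exact, R : ℬ → 𝒜, and let M, N be R-static objects of ℬ. If N is M-CS-Rickart in ℬ, then R(N) is R(M)-CS-Rickart in 𝒜. -/
open CategoryTheory CategoryTheory.Limits

universe v u v₂ u₂

section Aux

open CategoryTheory.Abelian
open scoped Pseudoelement

variable {A : Type u} [Category.{v} A] [Abelian A] {B : Type u₂} [Category.{v₂} B] [Abelian B]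
variable (L : A ⥤ B) (R : B ⥤ A) (adj : L ⊣ R)

/-- The counit is an isomorphism on retracts of objects where it is an isomorphism. -/
lemma counit_iso_of_retract {M Q : B} (hM : IsIso (adj.counit.app M))
    (s : Q ⟶ M) (retr : M ⟶ Q) (hsr : s ≫ retr = 𝟙 Q) : IsIso (adj.counit.app Q) := by
  have nat_s := adj.counit.naturality s
  have nat_r := adj.counit.naturality retr
  simp only [Functor.comp_map, Functor.id_map] at nat_s nat_r
  refine ⟨⟨s ≫ inv (adj.counit.app M) ≫ L.map (R.map retr), ?_, ?_⟩⟩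
  · calc adj.counit.app Q ≫ s ≫ inv (adj.counit.app M) ≫ L.map (R.map retr)
        = (adj.counit.app Q ≫ s) ≫ inv (adj.counit.app M) ≫ L.map (R.map retr) := by
          simp only [Category.assoc]
      _ = (L.map (R.map s) ≫ adj.counit.app M) ≫ inv (adj.counit.app M) ≫
            L.map (R.map retr) := by rw [nat_s]
      _ = L.map (R.map s) ≫ L.map (R.map retr) := by
          simp only [Category.assoc, IsIso.hom_inv_id_assoc]
      _ = 𝟙 _ := by rw [← L.map_comp, ← R.map_comp, hsr, R.map_id, L.map_id]
  · calc (s ≫ inv (adj.counit.app M) ≫ L.map (R.map retr)) ≫ adj.counit.app Q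
        = s ≫ inv (adj.counit.app M) ≫ (L.map (R.map retr) ≫ adj.counit.app Q) := by
          simp only [Category.assoc]
      _ = s ≫ inv (adj.counit.app M) ≫ (adj.counit.app M ≫ retr) := by rw [nat_r]
      _ = s ≫ retr := by simp only [IsIso.inv_hom_id_assoc]
      _ = 𝟙 _ := hsr

/-- The counit is an isomorphism on the kernel of a map between objects
where it is an isomorphism, provided `L` is exact. -/
lemma counit_iso_kernel [PreservesFiniteLimits L] {M N : B} (g : M ⟶ N)
    (hM : IsIso (adj.counit.app M)) (hN : IsIso (adj.counit.app N)) :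
    IsIso (adj.counit.app (kernel g)) := by
  haveI : PreservesLimits R := adj.rightAdjoint_preservesLimits
  have nat_g := adj.counit.naturality g
  have nat_i := adj.counit.naturality (kernel.ι g)
  simp only [Functor.comp_map, Functor.id_map] at nat_g nat_i
  have hinv : inv (adj.counit.app M) ≫ L.map (R.map g) = g ≫ inv (adj.counit.app N) := by
    rw [← cancel_mono (adj.counit.app N)]
    simp only [Category.assoc, nat_g, IsIso.inv_hom_id, Category.comp_id,
      IsIso.inv_hom_id_assoc]
  have h0 : (kernel.ι g ≫ inv (adj.counit.app M)) ≫ (R ⋙ L).map g = 0 := by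
    simp only [Functor.comp_map, Category.assoc, hinv]
    rw [← Category.assoc, kernel.condition, zero_comp]
  set χ : kernel g ⟶ (R ⋙ L).obj (kernel g) :=
    kernel.lift ((R ⋙ L).map g) (kernel.ι g ≫ inv (adj.counit.app M)) h0 ≫
      inv (kernelComparison g (R ⋙ L)) with hχ
  have hkc : inv (kernelComparison g (R ⋙ L)) ≫ (R ⋙ L).map (kernel.ι g)
      = kernel.ι ((R ⋙ L).map g) := by
    rw [IsIso.inv_comp_eq]
    exact (kernelComparison_comp_ι g (R ⋙ L)).symm
  have hχι : χ ≫ (R ⋙ L).map (kernel.ι g) = kernel.ι g ≫ inv (adj.counit.app M) := by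
    rw [hχ, Category.assoc, hkc, kernel.lift_ι]
  haveI : Mono ((R ⋙ L).map (kernel.ι g)) := (R ⋙ L).map_mono (kernel.ι g)
  have nat_i' : (R ⋙ L).map (kernel.ι g) ≫ adj.counit.app M
      = adj.counit.app (kernel g) ≫ kernel.ι g := by
    simpa only [Functor.comp_map] using nat_i
  refine ⟨⟨χ, ?_, ?_⟩⟩
  · apply (cancel_mono ((R ⋙ L).map (kernel.ι g))).1
    rw [Category.assoc, hχι, Category.id_comp, ← Category.assoc, ← nat_i']
    simp only [Category.assoc, IsIso.hom_inv_id, Category.comp_id]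
  · apply (cancel_mono (kernel.ι g)).1
    rw [Category.assoc, ← nat_i', ← Category.assoc, hχι, Category.id_comp]
    simp only [Category.assoc, IsIso.inv_hom_id, Category.comp_id]

/-- Transfer of essential monomorphisms along `R` at objects with invertible counit. -/
lemma essentialMono_R_map [PreservesFiniteLimits L]
    {K Q : B} (e : K ⟶ Q) (hE : EssentialMono e)
    (hK : IsIso (adj.counit.app K)) (hQ : IsIso (adj.counit.app Q)) :
    EssentialMono (R.map e) := by
  haveI : PreservesLimits R := adj.rightAdjoint_preservesLimits
  haveI := hE.1
  constructor
  · exact R.map_mono e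
  · intro P h' hm
    -- show that `u := L.map (kernel.ι h') ≫ ε_Q` is zero
    have hu : L.map (kernel.ι h') ≫ adj.counit.app Q = 0 := by
      set u : L.obj (kernel h') ⟶ Q := L.map (kernel.ι h') ≫ adj.counit.app Q with hu_def
      have hmπ : Mono (e ≫ cokernel.π u) := by
        apply Pseudoelement.mono_of_zero_of_map_zero
        intro x hx
        rw [Pseudoelement.comp_apply] at hx
        obtain ⟨y, hy⟩ :=
          Pseudoelement.pseudo_exact_of_exact (ShortComplex.exact_cokernel u) _ hx
        -- `e = inv ε_K ≫ L R e ≫ ε_Q`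
        have nat_e := adj.counit.naturality e
        simp only [Functor.comp_map, Functor.id_map] at nat_e
        have hre : inv (adj.counit.app K) ≫ L.map (R.map e) ≫ adj.counit.app Q = e := by
          rw [nat_e, IsIso.inv_hom_id_assoc]
        have hy' : Pseudoelement.pseudoApply u y = Pseudoelement.pseudoApply e x := hy
        -- from `u y = e x` deduce `(L.map k) y = (L R e) (inv ε_K x)`
        have h1 : (adj.counit.app Q) ((L.map (kernel.ι h')) y)
            = (adj.counit.app Q) ((L.map (R.map e)) ((inv (adj.counit.app K)) x)) := by
          rw [← Pseudoelement.comp_apply, ← hu_def, hy', ← Pseudoelement.comp_apply,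
            ← Pseudoelement.comp_apply, hre]
        haveI : Mono (adj.counit.app Q) := inferInstance
        have h2 : (L.map (kernel.ι h')) y = (L.map (R.map e)) ((inv (adj.counit.app K)) x) :=
          Pseudoelement.pseudo_injective_of_mono _ h1
        -- apply `L.map h'`
        haveI : Mono (L.map (R.map e ≫ h')) := L.map_mono _
        have h3 : (L.map (R.map e ≫ h')) ((inv (adj.counit.app K)) x) = 0 := by
          rw [L.map_comp, Pseudoelement.comp_apply, ← h2, ← Pseudoelement.comp_apply,
            ← L.map_comp, kernel.condition, L.map_zero, Pseudoelement.zero_apply]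
        have h4 : (inv (adj.counit.app K)) x = 0 :=
          Pseudoelement.zero_of_map_zero _ (Pseudoelement.pseudo_injective_of_mono _) _ h3
        have h5 : (inv (adj.counit.app K)) x = (inv (adj.counit.app K)) 0 := by
          rw [h4, Pseudoelement.apply_zero]
        exact Pseudoelement.pseudo_injective_of_mono _ h5
      have hπ : Mono (cokernel.π u) := hE.2 _ hmπ
      haveI : IsIso (cokernel.π u) := isIso_of_mono_of_epi _
      exact (cancel_mono (cokernel.π u)).1 (by rw [cokernel.condition, zero_comp])
    have hk : kernel.ι h' = 0 := by
      apply (adj.homEquiv _ _).symm.injective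
      rw [adj.homEquiv_counit, adj.homEquiv_counit, hu, L.map_zero, zero_comp]
    exact Abelian.mono_of_kernel_ι_eq_zero _ hk

end Aux

theorem csRickart_R_of_static
    {A : Type u} [Category.{v} A] [Abelian A] {B : Type u₂} [Category.{v₂} B] [Abelian B]
    (L : A ⥤ B) (R : B ⥤ A) (adj : L ⊣ R)
    [PreservesFiniteLimits L] [PreservesFiniteColimits L]
    (M N : B) (hM : IsIso (adj.counit.app M)) (hN : IsIso (adj.counit.app N))
    (h : CSRickart M N) : CSRickart (R.obj M) (R.obj N) := by
  haveI : PreservesLimits R := adj.rightAdjoint_preservesLimits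
  intro f
  obtain ⟨g, rfl⟩ : ∃ g : M ⟶ N, R.map g = f := by
    refine ⟨inv (adj.counit.app M) ≫ L.map f ≫ adj.counit.app N, ?_⟩
    haveI := hM
    have h1 : adj.unit.app (R.obj M) = inv (R.map (adj.counit.app M)) :=
      IsIso.eq_inv_of_inv_hom_id (adj.right_triangle_components M)
    have h2 := adj.unit.naturality f
    simp only [Functor.comp_map, Functor.id_map] at h2
    rw [R.map_comp, R.map_comp, R.map_inv, ← h1, ← Category.assoc, ← h2]
    simp
  obtain ⟨Q, e, s, hE, ⟨retr, hretr⟩, hes⟩ := h g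
  have hQ : IsIso (adj.counit.app Q) := counit_iso_of_retract L R adj hM s retr hretr
  have hK : IsIso (adj.counit.app (kernel g)) := counit_iso_kernel L R adj g hM hN
  have hEM : EssentialMono (R.map e) := essentialMono_R_map L R adj e hE hK hQ
  refine ⟨R.obj Q, inv (kernelComparison g R) ≫ R.map e, R.map s, ⟨?_, ?_⟩,
    ⟨R.map retr, by rw [← R.map_comp, hretr, R.map_id]⟩, ?_⟩
  · haveI := hEM.1
    exact mono_comp _ _
  · intro P h' hm
    have : Mono (R.map e ≫ h') := by
      have heq : R.map e ≫ h' =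
          kernelComparison g R ≫ ((inv (kernelComparison g R) ≫ R.map e) ≫ h') := by simp
      rw [heq]
      haveI : Mono ((inv (kernelComparison g R) ≫ R.map e) ≫ h') := hm
      exact mono_comp _ _
    exact hEM.2 _ this
  · rw [Category.assoc, ← R.map_comp, hes, IsIso.inv_comp_eq]
    exact (kernelComparison_comp_ι g R).symm
end

section
/- Let (L, R) be an adjoint pair with L : 𝒜 → ℬ exact, R : ℬ → 𝒜 reflecting zero objects, and let M, N be R-static objects of ℬ. If R(N) is R(M)-CS-Rickart in 𝒜, then N is M-CS-Rickart in ℬ. -/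
open CategoryTheory CategoryTheory.Limits

universe v u v₂ u₂

theorem csRickart_of_R_csRickart_static
    {A : Type u} [Category.{v} A] [Abelian A] {B : Type u₂} [Category.{v₂} B] [Abelian B]
    (L : A ⥤ B) (R : B ⥤ A) (adj : L ⊣ R)
    [PreservesFiniteLimits L] [PreservesFiniteColimits L]
    (hrefl : ∀ X : B, IsZero (R.obj X) → IsZero X)
    (M N : B) (hM : IsIso (adj.counit.app M)) (hN : IsIso (adj.counit.app N))
    (h : CSRickart (R.obj M) (R.obj N)) : CSRickart M N := by
  haveI : PreservesLimitsOfSize.{0, 0} R := adj.rightAdjoint_preservesLimits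
  intro f
  obtain ⟨Q, e, s, he, ⟨retr, hretr⟩, hes⟩ := h (R.map f)
  haveI : Mono e := he.1
  have hnat : L.map (R.map f) ≫ adj.counit.app N = adj.counit.app M ≫ f :=
    adj.counit.naturality f
  have hLRf : L.map (R.map f) = adj.counit.app M ≫ f ≫ inv (adj.counit.app N) := by
    rw [← Category.assoc, ← hnat, Category.assoc, IsIso.hom_inv_id, Category.comp_id]
  have hc1 : (kernel.ι f ≫ inv (adj.counit.app M)) ≫ L.map (R.map f) = 0 := by
    rw [hLRf, Category.assoc, IsIso.inv_hom_id_assoc, ← Category.assoc, kernel.condition,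
      zero_comp]
  have hc2 : (kernel.ι (L.map (R.map f)) ≫ adj.counit.app M) ≫ f = 0 := by
    rw [Category.assoc, ← hnat, ← Category.assoc, kernel.condition, zero_comp]
  obtain ⟨u1, u2, hu12, hu21, hu1ι, hu2ι⟩ :
      ∃ (u1 : kernel f ⟶ kernel (L.map (R.map f)))
        (u2 : kernel (L.map (R.map f)) ⟶ kernel f),
        u1 ≫ u2 = 𝟙 _ ∧ u2 ≫ u1 = 𝟙 _
          ∧ u1 ≫ kernel.ι (L.map (R.map f)) = kernel.ι f ≫ inv (adj.counit.app M)
          ∧ u2 ≫ kernel.ι f = kernel.ι (L.map (R.map f)) ≫ adj.counit.app M :=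
    ⟨kernel.lift _ _ hc1, kernel.lift _ _ hc2, by ext; simp, by ext; simp, by simp, by simp⟩
  obtain ⟨v1, v2, hv12, hv21, hvι⟩ :
      ∃ (v1 : L.obj (kernel (R.map f)) ⟶ kernel (L.map (R.map f)))
        (v2 : kernel (L.map (R.map f)) ⟶ L.obj (kernel (R.map f))),
        v1 ≫ v2 = 𝟙 _ ∧ v2 ≫ v1 = 𝟙 _
          ∧ v2 ≫ L.map (kernel.ι (R.map f)) = kernel.ι (L.map (R.map f)) := by
    refine ⟨(PreservesKernel.iso L (R.map f)).hom, (PreservesKernel.iso L (R.map f)).inv,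
      Iso.hom_inv_id _, Iso.inv_hom_id _, ?_⟩
    rw [Iso.inv_comp_eq]
    simp
  haveI : Mono (u1 ≫ u2) := by rw [hu12]; infer_instance
  haveI : Mono u1 := mono_of_mono u1 u2
  haveI : Mono (v2 ≫ v1) := by rw [hv21]; infer_instance
  haveI : Mono v2 := mono_of_mono v2 v1
  refine ⟨L.obj Q, u1 ≫ v2 ≫ L.map e, L.map s ≫ adj.counit.app M, ⟨inferInstance, ?_⟩,
    ⟨inv (adj.counit.app M) ≫ L.map retr, ?_⟩, ?_⟩
  · -- essentiality
    intro P hmap hmono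
    haveI : Mono (L.map e ≫ hmap) := by
      have h2 : v1 ≫ u2 ≫ ((u1 ≫ v2 ≫ L.map e) ≫ hmap) = L.map e ≫ hmap := by
        simp only [Category.assoc]
        rw [← Category.assoc u2 u1, hu21, Category.id_comp, ← Category.assoc v1 v2, hv12,
          Category.id_comp]
      rw [← h2]
      haveI : Mono ((u1 ≫ v2 ≫ L.map e) ≫ hmap) := hmono
      haveI : Mono (v1 ≫ v2) := by rw [hv12]; infer_instance
      haveI : Mono v1 := mono_of_mono v1 v2
      haveI : Mono (u2 ≫ u1) := by rw [hu21]; infer_instance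
      haveI : Mono u2 := mono_of_mono u2 u1
      infer_instance
    haveI hRm : Mono (R.map (L.map e ≫ hmap)) := inferInstance
    haveI : IsIso (R.map (adj.counit.app M)) := inferInstance
    have htri := adj.right_triangle_components M
    have hunitM : adj.unit.app (R.obj M) = inv (R.map (adj.counit.app M)) := by
      rw [← cancel_mono (R.map (adj.counit.app M)), htri, IsIso.inv_hom_id]
      rfl
    haveI : IsIso (adj.unit.app (R.obj M)) := by rw [hunitM]; infer_instance
    have hnats : s ≫ adj.unit.app (R.obj M) = adj.unit.app Q ≫ R.map (L.map s) := by
      simpa using adj.unit.naturality s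
    have hnatr : retr ≫ adj.unit.app Q = adj.unit.app (R.obj M) ≫ R.map (L.map retr) := by
      simpa using adj.unit.naturality retr
    haveI : IsIso (adj.unit.app Q) := by
      refine ⟨R.map (L.map s) ≫ R.map (adj.counit.app M) ≫ retr, ?_, ?_⟩
      · rw [← Category.assoc, ← hnats, Category.assoc,
          ← Category.assoc (adj.unit.app (R.obj M)), htri]
        simpa using hretr
      · rw [Category.assoc, Category.assoc, hnatr, ← Category.assoc (R.map (adj.counit.app M)),
          hunitM, IsIso.hom_inv_id, Category.id_comp, ← R.map_comp, ← L.map_comp, hretr]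
        simp
    have hnatι : kernel.ι (R.map f) ≫ adj.unit.app (R.obj M)
        = adj.unit.app (kernel (R.map f)) ≫ R.map (L.map (kernel.ι (R.map f))) := by
      simpa using adj.unit.naturality (kernel.ι (R.map f))
    haveI : Mono (adj.unit.app (kernel (R.map f)) ≫ R.map (L.map (kernel.ι (R.map f)))) := by
      rw [← hnatι]; infer_instance
    haveI : Mono (adj.unit.app (kernel (R.map f))) :=
      mono_of_mono _ (R.map (L.map (kernel.ι (R.map f))))
    have hnate : e ≫ adj.unit.app Q = adj.unit.app (kernel (R.map f)) ≫ R.map (L.map e) := by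
      simpa using adj.unit.naturality e
    have hmonoA : Mono (e ≫ (adj.unit.app Q ≫ R.map hmap)) := by
      rw [← Category.assoc, hnate, Category.assoc]
      have h3 : R.map (L.map e) ≫ R.map hmap = R.map (L.map e ≫ hmap) := by rw [R.map_comp]
      rw [h3]
      infer_instance
    have hm1 : Mono (adj.unit.app Q ≫ R.map hmap) := he.2 _ hmonoA
    haveI : Mono (R.map hmap) := by
      have h4 : R.map hmap = inv (adj.unit.app Q) ≫ (adj.unit.app Q ≫ R.map hmap) := by simp
      rw [h4]
      haveI := hm1
      infer_instance
    have hz : IsZero (kernel (R.map hmap)) :=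
      IsZero.of_mono_eq_zero (kernel.ι (R.map hmap)) (kernel.ι_of_mono _)
    have hz2 : IsZero (R.obj (kernel hmap)) := hz.of_iso (PreservesKernel.iso R hmap)
    exact Preadditive.mono_of_isZero_kernel _ (hrefl _ hz2)
  · rw [Category.assoc, ← Category.assoc (adj.counit.app M), IsIso.hom_inv_id,
      Category.id_comp, ← L.map_comp, hretr, L.map_id]
  · rw [Category.assoc, Category.assoc, ← Category.assoc (L.map e), ← L.map_comp, hes,
      ← Category.assoc v2, hvι, ← Category.assoc, hu1ι, Category.assoc, IsIso.inv_hom_id,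
      Category.comp_id]
end

section
/- Let (L, R) be an adjoint pair with R : ℬ → 𝒜 exact, L : 𝒜 → ℬ, and let M, N be R-adstatic objects of 𝒜. If N is dual M-CS-Rickart in 𝒜, then L(N) is dual L(M)-CS-Rickart in ℬ. -/
open CategoryTheory CategoryTheory.Limits

universe v u v₂ u₂

theorem dualCSRickart_L_of_adstatic
    {A : Type u} [Category.{v} A] [Abelian A] {B : Type u₂} [Category.{v₂} B] [Abelian B]
    (L : A ⥤ B) (R : B ⥤ A) (adj : L ⊣ R)
    [PreservesFiniteLimits R] [PreservesFiniteColimits R]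
    (M N : A) (hM : IsIso (adj.unit.app M)) (hN : IsIso (adj.unit.app N))
    (h : DualCSRickart M N) : DualCSRickart (L.obj M) (L.obj N) := by
  haveI : PreservesColimitsOfSize.{0,0} L := adj.leftAdjoint_preservesColimits
  intro g
  set f : M ⟶ N := adj.unit.app M ≫ R.map g ≫ inv (adj.unit.app N) with hf
  have hLf : L.map f = g := by
    apply (adj.homEquiv _ _).injective
    rw [adj.homEquiv_unit, adj.homEquiv_unit]
    have h1 : adj.unit.app M ≫ R.map (L.map f) = f ≫ adj.unit.app N := by
      simpa using (adj.unit.naturality f).symm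
    rw [h1, hf]
    simp
  rw [← hLf]
  obtain ⟨P, r, t, ⟨sec, hsec⟩, ⟨htE, htS⟩, hrt⟩ := h f
  -- unit is iso at P
  have hP : IsIso (adj.unit.app P) := by
    refine ⟨(L ⋙ R).map sec ≫ inv (adj.unit.app N) ≫ r, ?_, ?_⟩
    · have h1 : adj.unit.app P ≫ (L ⋙ R).map sec = sec ≫ adj.unit.app N := by
        simpa using (adj.unit.naturality sec).symm
      rw [← Category.assoc, h1]
      simp [hsec]
    · have h2 : r ≫ adj.unit.app P = adj.unit.app N ≫ (L ⋙ R).map r := by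
        simpa using adj.unit.naturality r
      simp only [Category.assoc, h2, IsIso.inv_hom_id_assoc, ← Functor.map_comp, hsec]
      simp
  -- unit is iso at cokernel f
  have hw : (L ⋙ R).map f ≫ inv (adj.unit.app N) ≫ cokernel.π f = 0 := by
    rw [← cancel_epi (adj.unit.app M), comp_zero, ← Category.assoc]
    have h1 : adj.unit.app M ≫ (L ⋙ R).map f = f ≫ adj.unit.app N := by
      simpa using (adj.unit.naturality f).symm
    rw [h1]
    simp
  set φ : (L ⋙ R).obj (cokernel f) ⟶ cokernel f :=
    inv (cokernelComparison f (L ⋙ R)) ≫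
      cokernel.desc ((L ⋙ R).map f) (inv (adj.unit.app N) ≫ cokernel.π f) hw with hφ
  have hπφ : (L ⋙ R).map (cokernel.π f) ≫ φ = inv (adj.unit.app N) ≫ cokernel.π f := by
    rw [hφ, ← π_comp_cokernelComparison]
    simp
  have hCF : IsIso (adj.unit.app (cokernel f)) := by
    refine ⟨φ, ?_, ?_⟩
    · rw [← cancel_epi (cokernel.π f), ← Category.assoc]
      have h1 : cokernel.π f ≫ adj.unit.app (cokernel f)
          = adj.unit.app N ≫ (L ⋙ R).map (cokernel.π f) := by
        simpa using adj.unit.naturality (cokernel.π f)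
      rw [h1, Category.assoc, hπφ]
      simp
    · haveI : Epi ((L ⋙ R).map (cokernel.π f)) := inferInstance
      rw [← cancel_epi ((L ⋙ R).map (cokernel.π f)), ← Category.assoc, hπφ]
      have h1 : cokernel.π f ≫ adj.unit.app (cokernel f)
          = adj.unit.app N ≫ (L ⋙ R).map (cokernel.π f) := by
        simpa using adj.unit.naturality (cokernel.π f)
      rw [Category.assoc, h1, IsIso.inv_hom_id_assoc, Category.comp_id]
  haveI := htE
  refine ⟨L.obj P, L.map r, L.map t ≫ inv (cokernelComparison f L),
    ⟨L.map sec, by rw [← L.map_comp, hsec, L.map_id]⟩, ⟨inferInstance, ?_⟩, ?_⟩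
  · -- superfluous
    intro Q hq hepi
    -- show R.map hq is epi
    have hnat_t : inv (adj.unit.app P) ≫ t = (L ⋙ R).map t ≫ inv (adj.unit.app (cokernel f)) := by
      rw [IsIso.inv_comp_eq, ← Category.assoc, IsIso.eq_comp_inv]
      simpa using adj.unit.naturality t
    have heq : (R.map hq ≫ inv (adj.unit.app P)) ≫ t
        = R.map (hq ≫ L.map t ≫ inv (cokernelComparison f L))
            ≫ R.map (cokernelComparison f L) ≫ inv (adj.unit.app (cokernel f)) := by
      rw [Category.assoc, hnat_t]
      simp [← R.map_comp]
    haveI := hepi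
    have hepi' : Epi ((R.map hq ≫ inv (adj.unit.app P)) ≫ t) := by
      rw [heq]
      infer_instance
    have hepi'' : Epi (R.map hq ≫ inv (adj.unit.app P)) := htS _ hepi'
    haveI hRhq : Epi (R.map hq) := by
      have : R.map hq = (R.map hq ≫ inv (adj.unit.app P)) ≫ adj.unit.app P := by simp
      rw [this]
      exact epi_comp _ _
    -- reflect epi through the adjunction
    have hz : IsZero (R.obj (cokernel hq)) :=
      IsZero.of_iso (isZero_zero A)
        ((asIso (cokernelComparison hq R)).symm ≪≫ cokernel.ofEpi (R.map hq))
    have hπ0 : cokernel.π hq = 0 := by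
      apply (adj.homEquiv _ _).injective
      exact hz.eq_of_tgt _ _
    exact Abelian.epi_of_cokernel_π_eq_zero _ hπ0
  · rw [← Category.assoc, ← L.map_comp, hrt, ← π_comp_cokernelComparison]
    simp
end

section
/- Let (L, R) be an adjoint pair with R : ℬ → 𝒜 exact, L : 𝒜 → ℬ reflecting zero objects, and let M, N be R-adstatic objects of 𝒜. If L(N) is dual L(M)-CS-Rickart in ℬ, then N is dual M-CS-Rickart in 𝒜. -/
open CategoryTheory CategoryTheory.Limits

universe v u v₂ u₂

theorem dualCSRickart_of_L_dualCSRickart_adstatic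
    {A : Type u} [Category.{v} A] [Abelian A] {B : Type u₂} [Category.{v₂} B] [Abelian B]
    (L : A ⥤ B) (R : B ⥤ A) (adj : L ⊣ R)
    [PreservesFiniteLimits R] [PreservesFiniteColimits R]
    (hrefl : ∀ X : A, IsZero (L.obj X) → IsZero X)
    (M N : A) (hM : IsIso (adj.unit.app M)) (hN : IsIso (adj.unit.app N))
    (h : DualCSRickart (L.obj M) (L.obj N)) : DualCSRickart M N := by
  haveI : L.IsLeftAdjoint := adj.isLeftAdjoint
  haveI : PreservesColimitsOfSize.{0,0} L := adj.leftAdjoint_preservesColimits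
  -- counit at L.obj M and L.obj N are isomorphisms
  haveI hεM : IsIso (adj.counit.app (L.obj M)) := by
    haveI : IsIso (L.map (adj.unit.app M) ≫ adj.counit.app (L.obj M)) := by
      rw [show L.map (adj.unit.app M) ≫ adj.counit.app (L.obj M) = 𝟙 _ from by simp]; exact IsIso.id _
    exact IsIso.of_isIso_comp_left (L.map (adj.unit.app M)) (adj.counit.app (L.obj M))
  haveI hεN : IsIso (adj.counit.app (L.obj N)) := by
    haveI : IsIso (L.map (adj.unit.app N) ≫ adj.counit.app (L.obj N)) := by
      rw [show L.map (adj.unit.app N) ≫ adj.counit.app (L.obj N) = 𝟙 _ from by simp]; exact IsIso.id _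
    exact IsIso.of_isIso_comp_left (L.map (adj.unit.app N)) (adj.counit.app (L.obj N))
  intro f
  obtain ⟨P, r, t, ⟨sec, hsec⟩, ⟨htepi, htsup⟩, hrt⟩ := h (L.map f)
  have wu : R.map (L.map f) ≫ inv (adj.unit.app N) = inv (adj.unit.app M) ≫ f := by
    rw [IsIso.eq_inv_comp, ← Category.assoc, IsIso.comp_inv_eq]
    exact (adj.unit.naturality f).symm
  -- iso between R(cokernel (L f)) and cokernel f
  let φiso : R.obj (cokernel (L.map f)) ≅ cokernel f :=
    (asIso (cokernelComparison (L.map f) R)).symm ≪≫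
      cokernel.mapIso (R.map (L.map f)) f (asIso (adj.unit.app M)).symm
        (asIso (adj.unit.app N)).symm (by simpa using wu.symm)
  have hφ : R.map (cokernel.π (L.map f)) ≫ φiso.hom =
      inv (adj.unit.app N) ≫ cokernel.π f := by
    have h1 : R.map (cokernel.π (L.map f)) ≫ inv (cokernelComparison (L.map f) R) =
        cokernel.π (R.map (L.map f)) := by
      rw [IsIso.comp_inv_eq, π_comp_cokernelComparison]
    simp only [φiso, Iso.trans_hom, Iso.symm_hom, asIso_inv, ← Category.assoc, h1]
    simp [cokernel.map, cokernel.mapIso]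
  have hrt' : (adj.unit.app N ≫ R.map r) ≫ (R.map t ≫ φiso.hom) = cokernel.π f := by
    rw [Category.assoc, ← Category.assoc (R.map r), ← R.map_comp, hrt, hφ,
      IsIso.hom_inv_id_assoc]
  refine ⟨R.obj P, adj.unit.app N ≫ R.map r, R.map t ≫ φiso.hom,
    ⟨R.map sec ≫ inv (adj.unit.app N), ?_⟩, ⟨?_, ?_⟩, hrt'⟩
  · rw [Category.assoc, IsIso.inv_hom_id_assoc, ← R.map_comp, hsec, R.map_id]
  · haveI : Epi ((adj.unit.app N ≫ R.map r) ≫ (R.map t ≫ φiso.hom)) := by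
      rw [hrt']; infer_instance
    exact epi_of_epi (adj.unit.app N ≫ R.map r) (R.map t ≫ φiso.hom)
  · intro Q g hg
    have wc := adj.counit.naturality (L.map f)
    have key : cokernelComparison (L.map f) (R ⋙ L) ≫ adj.counit.app (cokernel (L.map f)) =
        cokernel.map ((R ⋙ L).map (L.map f)) (L.map f) (adj.counit.app (L.obj M))
          (adj.counit.app (L.obj N)) wc := by
      rw [← cancel_epi (cokernel.π ((R ⋙ L).map (L.map f))), π_comp_cokernelComparison_assoc,
        adj.counit.naturality (cokernel.π (L.map f))]
      simp [cokernel.map]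
    haveI : IsIso (cokernel.map ((R ⋙ L).map (L.map f)) (L.map f) (adj.counit.app (L.obj M))
        (adj.counit.app (L.obj N)) wc) :=
      (inferInstance : IsIso (cokernel.mapIso ((R ⋙ L).map (L.map f)) (L.map f)
        (asIso (adj.counit.app (L.obj M))) (asIso (adj.counit.app (L.obj N))) wc).hom)
    haveI hεC : IsIso (adj.counit.app (cokernel (L.map f))) := by
      have hc : adj.counit.app (cokernel (L.map f)) =
          inv (cokernelComparison (L.map f) (R ⋙ L)) ≫
            cokernel.map ((R ⋙ L).map (L.map f)) (L.map f) (adj.counit.app (L.obj M))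
              (adj.counit.app (L.obj N)) wc := by
        rw [← key, IsIso.inv_hom_id_assoc]
      rw [hc]; infer_instance
    haveI hεP : IsIso (adj.counit.app P) := by
      have n1 : (R ⋙ L).map sec ≫ adj.counit.app (L.obj N) = adj.counit.app P ≫ sec := by
        simpa using adj.counit.naturality sec
      have n2 : (R ⋙ L).map r ≫ adj.counit.app P = adj.counit.app (L.obj N) ≫ r := by
        simpa using adj.counit.naturality r
      refine ⟨sec ≫ inv (adj.counit.app (L.obj N)) ≫ (R ⋙ L).map r, ?_, ?_⟩
      · rw [← Category.assoc, ← n1, Category.assoc, IsIso.hom_inv_id_assoc,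
          ← Functor.map_comp, hsec]
        exact CategoryTheory.Functor.map_id _ _
      · rw [Category.assoc, Category.assoc, n2, IsIso.inv_hom_id_assoc, hsec]
        rfl
    haveI hg' : Epi ((g ≫ R.map t) ≫ φiso.hom) := by rw [Category.assoc]; exact hg
    haveI : Epi (g ≫ R.map t) := by
      have e0 : g ≫ R.map t = ((g ≫ R.map t) ≫ φiso.hom) ≫ φiso.inv := by simp
      rw [e0]; exact epi_comp _ _
    haveI : Epi (L.map (g ≫ R.map t)) := L.map_epi _
    have e : (L.map g ≫ adj.counit.app P) ≫ t =
        L.map (g ≫ R.map t) ≫ adj.counit.app (cokernel (L.map f)) := by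
      rw [L.map_comp, Category.assoc, Category.assoc]
      congr 1
      exact (adj.counit.naturality t).symm
    haveI : Epi ((L.map g ≫ adj.counit.app P) ≫ t) := by rw [e]; exact epi_comp _ _
    haveI : Epi (L.map g ≫ adj.counit.app P) :=
      htsup (L.map g ≫ adj.counit.app P) inferInstance
    haveI : Epi (L.map g) := by
      have e1 : L.map g = (L.map g ≫ adj.counit.app P) ≫ inv (adj.counit.app P) := by simp
      rw [e1]; exact epi_comp _ _
    have hz : IsZero (L.obj (cokernel g)) :=
      IsZero.of_iso (IsZero.of_iso (isZero_zero B) (cokernel.ofEpi (L.map g)))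
        (PreservesCokernel.iso L g)
    exact Preadditive.epi_of_isZero_cokernel g (hrefl _ hz)
end

section
/- Let (L, R) be an adjoint pair of covariant functors between abelian categories with L exact and R fully faithful. For objects M, N of ℬ, N is M-CS-Rickart in ℬ if and only if R(N) is R(M)-CS-Rickart in 𝒜. -/
open CategoryTheory CategoryTheory.Limits

universe v u v₂ u₂

section Aux

variable {C : Type u} [Category.{v} C]

lemma mono_of_isIso_comp {X Y Z : C} (i : X ⟶ Y) [IsIso i] (h : Y ⟶ Z)
    (hm : Mono (i ≫ h)) : Mono h := by
  haveI := hm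
  have : h = inv i ≫ (i ≫ h) := by simp
  rw [this]
  exact mono_comp _ _

lemma essentialMono_comp_iso {X Y Z : C} (e : X ⟶ Y) (i : Y ⟶ Z) [IsIso i]
    (he : EssentialMono e) : EssentialMono (e ≫ i) := by
  haveI : Mono e := he.1
  refine ⟨mono_comp _ _, fun P h hm => ?_⟩
  rw [Category.assoc] at hm
  exact mono_of_isIso_comp i h (he.2 (i ≫ h) hm)

lemma essentialMono_iso_comp {X Y Z : C} (i : X ⟶ Y) [IsIso i] (e : Y ⟶ Z)
    (he : EssentialMono e) : EssentialMono (i ≫ e) := by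
  haveI : Mono e := he.1
  refine ⟨mono_comp _ _, fun P h hm => ?_⟩
  rw [Category.assoc] at hm
  exact he.2 h (mono_of_isIso_comp i (e ≫ h) hm)

end Aux

section Adj

variable {A : Type u} [Category.{v} A] [Abelian A] {B : Type u₂} [Category.{v₂} B] [Abelian B]

/-- If `L.map h` is mono, for `h` out of an object in the image of `R`, then `h` is mono. -/
lemma mono_of_L_map_mono (L : A ⥤ B) (R : B ⥤ A) (adj : L ⊣ R)
    [PreservesFiniteLimits L]
    {Q : B} {P : A} (h : R.obj Q ⟶ P) (hm : Mono (L.map h)) :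
    Mono h := by
  haveI : PreservesLimitsOfSize.{0, 0} R := adj.rightAdjoint_preservesLimits
  apply Preadditive.mono_of_cancel_zero
  intro K g hg
  have hLg : L.map g = 0 := by
    have : L.map g ≫ L.map h = 0 := by rw [← L.map_comp, hg, L.map_zero]
    exact zero_of_comp_mono (L.map h) this
  have hnat : g ≫ adj.unit.app (R.obj Q) = adj.unit.app K ≫ R.map (L.map g) :=
    adj.unit.naturality g
  calc g = g ≫ adj.unit.app (R.obj Q) ≫ R.map (adj.counit.app Q) := by
            rw [adj.right_triangle_components, Category.comp_id]
    _ = (adj.unit.app K ≫ R.map (L.map g)) ≫ R.map (adj.counit.app Q) := by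
            rw [← Category.assoc, hnat]
    _ = 0 := by rw [hLg, R.map_zero, comp_zero, zero_comp]

/-- `R` maps essential monos to essential monos. -/
lemma essentialMono_R_map_s13 (L : A ⥤ B) (R : B ⥤ A) (adj : L ⊣ R)
    [PreservesFiniteLimits L] [R.Full] [R.Faithful]
    {K Q : B} {e : K ⟶ Q} (he : EssentialMono e) :
    EssentialMono (R.map e) := by
  haveI := Functor.preservesMonomorphisms_of_adjunction adj
  haveI : Mono e := he.1
  refine ⟨inferInstance, fun P h hm => ?_⟩
  haveI : Mono (L.map (R.map e ≫ h)) := Functor.map_mono L _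
  rw [L.map_comp] at this
  have hnat : L.map (R.map e) ≫ adj.counit.app Q = adj.counit.app K ≫ e :=
    adj.counit.naturality e
  have h2 : inv (adj.counit.app K) ≫ L.map (R.map e) = e ≫ inv (adj.counit.app Q) := by
    rw [IsIso.inv_comp_eq, ← Category.assoc, IsIso.eq_comp_inv]
    exact hnat
  have key : Mono (e ≫ (inv (adj.counit.app Q) ≫ L.map h)) := by
    rw [← Category.assoc, ← h2, Category.assoc]
    exact mono_comp _ _
  have h1 := he.2 _ key
  have hLh : Mono (L.map h) := mono_of_isIso_comp (inv (adj.counit.app Q)) (L.map h) h1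
  exact mono_of_L_map_mono L R adj h hLh

/-- `R` reflects essential monos. -/
lemma essentialMono_of_R_map (L : A ⥤ B) (R : B ⥤ A) (adj : L ⊣ R) [R.Faithful]
    {K Q : B} {e : K ⟶ Q} (he : EssentialMono (R.map e)) :
    EssentialMono e := by
  haveI := Functor.preservesMonomorphisms_of_adjunction adj
  haveI : Mono (R.map e) := he.1
  refine ⟨R.mono_of_mono_map he.1, fun P h hm => ?_⟩
  haveI : Mono (R.map (e ≫ h)) := Functor.map_mono R _
  rw [R.map_comp] at this
  exact R.mono_of_mono_map (he.2 (R.map h) this)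

end Adj

theorem csRickart_iff_R_csRickart
    {A : Type u} [Category.{v} A] [Abelian A] {B : Type u₂} [Category.{v₂} B] [Abelian B]
    (L : A ⥤ B) (R : B ⥤ A) (adj : L ⊣ R)
    [PreservesFiniteLimits L] [PreservesFiniteColimits L] [R.Full] [R.Faithful]
    (M N : B) :
    CSRickart M N ↔ CSRickart (R.obj M) (R.obj N) := by
  haveI : PreservesLimitsOfSize.{0, 0} R := adj.rightAdjoint_preservesLimits
  constructor
  · intro hcs f'
    obtain ⟨f, rfl⟩ := R.map_surjective f'
    obtain ⟨Q, e, s, he, ⟨retr, hretr⟩, hes⟩ := hcs f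
    refine ⟨R.obj Q, inv (kernelComparison f R) ≫ R.map e, R.map s, ?_, ?_, ?_⟩
    · exact essentialMono_iso_comp _ _ (essentialMono_R_map_s13 L R adj he)
    · exact ⟨R.map retr, by rw [← R.map_comp, hretr, R.map_id]⟩
    · rw [Category.assoc, ← R.map_comp, hes, ← kernelComparison_comp_ι f R,
        IsIso.inv_hom_id_assoc]
  · intro hcs f
    obtain ⟨Q, e, s, he, ⟨retr, hretr⟩, hes⟩ := hcs (R.map f)
    obtain ⟨q, hq⟩ := R.map_surjective (retr ≫ s)
    have hqq : q ≫ q = q := by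
      apply R.map_injective
      rw [R.map_comp, hq, Category.assoc, ← Category.assoc s, hretr, Category.id_comp]
    obtain ⟨QB, iB, eB, h1, h2⟩ := IsIdempotentComplete.idempotents_split M q hqq
    -- the iso `φ : Q ≅ R.obj QB`
    set φ : Q ⟶ R.obj QB := s ≫ R.map eB with hφdef
    set ψ : R.obj QB ⟶ Q := R.map iB ≫ retr with hψdef
    have hsq : s ≫ R.map q = s := by
      rw [hq, ← Category.assoc, hretr, Category.id_comp]
    have hφψ : φ ≫ ψ = 𝟙 Q := by
      rw [hφdef, hψdef, Category.assoc, ← Category.assoc (R.map eB), ← R.map_comp, h2,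
        ← Category.assoc, hsq, hretr]
    have hqeB : q ≫ eB = eB := by rw [← h2, Category.assoc, h1, Category.comp_id]
    have hψφ : ψ ≫ φ = 𝟙 (R.obj QB) := by
      rw [hψdef, hφdef, Category.assoc, ← Category.assoc retr, ← hq, ← R.map_comp,
        hqeB, ← R.map_comp, h1, R.map_id]
    haveI : IsIso φ := ⟨ψ, hφψ, hψφ⟩
    have hφiB : φ ≫ R.map iB = s := by
      rw [hφdef, Category.assoc, ← R.map_comp, h2, hsq]
    obtain ⟨eB', heB'⟩ := R.map_surjective (kernelComparison f R ≫ e ≫ φ)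
    refine ⟨QB, eB', iB, ?_, ⟨eB, h1⟩, ?_⟩
    · apply essentialMono_of_R_map L R adj
      rw [heB']
      exact essentialMono_iso_comp _ _ (essentialMono_comp_iso _ _ he)
    · apply R.map_injective
      rw [R.map_comp, heB', Category.assoc, Category.assoc, hφiB, hes,
        kernelComparison_comp_ι]
end

section
/- Let (L, R) be an adjoint pair of covariant functors between abelian categories with R exact and L fully faithful. For objects M, N of 𝒜, N is dual M-CS-Rickart in 𝒜 if and only if L(N) is dual L(M)-CS-Rickart in ℬ. -/
open CategoryTheory CategoryTheory.Limits

universe v u v₂ u₂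

set_option linter.unusedSectionVars false

section AuxDual
variable {A : Type u} [Category.{v} A] [Abelian A] {B : Type u₂} [Category.{v₂} B] [Abelian B]

lemma superfluous_comp_iso' {C : Type*} [Category C] {P Q S : C} {t : P ⟶ Q} (i : Q ⟶ S)
    [IsIso i] (ht : SuperfluousEpi t) : SuperfluousEpi (t ≫ i) := by
  obtain ⟨h1, h2⟩ := ht
  refine ⟨epi_comp _ _, fun X h hh => ?_⟩
  have : Epi ((h ≫ t ≫ i) ≫ inv i) := epi_comp _ _
  simp only [Category.assoc, IsIso.hom_inv_id, Category.comp_id] at this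
  exact h2 h this

lemma superfluous_L_map' (L : A ⥤ B) (R : B ⥤ A) (adj : L ⊣ R)
    [PreservesFiniteColimits R] [L.Full] [L.Faithful]
    {P C : A} {t : P ⟶ C} (ht : SuperfluousEpi t) : SuperfluousEpi (L.map t) := by
  haveI := adj.leftAdjoint_preservesColimits
  haveI : L.PreservesEpimorphisms := inferInstance
  haveI : R.PreservesEpimorphisms := inferInstance
  obtain ⟨h1, h2⟩ := ht
  refine ⟨L.map_epi t, fun X h hh => ?_⟩
  have hnat : adj.unit.app P ≫ R.map (L.map t) = t ≫ adj.unit.app C := by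
    have := adj.unit.naturality t
    simp only [Functor.comp_map, Functor.id_map] at this
    exact this.symm
  have key : (R.map h ≫ inv (adj.unit.app P)) ≫ t
      = R.map (h ≫ L.map t) ≫ inv (adj.unit.app C) := by
    rw [R.map_comp, Category.assoc, IsIso.eq_comp_inv, Category.assoc, Category.assoc, ← hnat,
      IsIso.inv_hom_id_assoc]
  haveI : Epi (R.map (h ≫ L.map t)) := R.map_epi _
  have hE : Epi ((R.map h ≫ inv (adj.unit.app P)) ≫ t) := by rw [key]; exact epi_comp _ _
  have hk : Epi (R.map h ≫ inv (adj.unit.app P)) := h2 _ hE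
  haveI : Epi (R.map h) := by
    have : Epi ((R.map h ≫ inv (adj.unit.app P)) ≫ adj.unit.app P) := @epi_comp _ _ _ _ _ _ hk _ _
    simpa using this
  have h1' : IsIso (𝟙 (L.obj P)) := inferInstance
  have h2' : IsIso (L.map (adj.unit.app P)) := inferInstance
  haveI : IsIso (adj.counit.app (L.obj P)) :=
    IsIso.of_isIso_fac_left (adj.left_triangle_components P)
  have hc : L.map (R.map h) ≫ adj.counit.app (L.obj P) = adj.counit.app X ≫ h := by
    have := adj.counit.naturality h
    simp only [Functor.comp_map, Functor.id_map] at this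
    exact this
  haveI : Epi (L.map (R.map h)) := L.map_epi _
  haveI : Epi (adj.counit.app X ≫ h) := by rw [← hc]; exact epi_comp _ _
  exact epi_of_epi (adj.counit.app X) h

lemma superfluous_R_map' (L : A ⥤ B) (R : B ⥤ A) (adj : L ⊣ R)
    [PreservesFiniteColimits R] [L.Full] [L.Faithful]
    {P C : B} {t : P ⟶ C} [IsIso (adj.counit.app C)]
    (ht : SuperfluousEpi t) : SuperfluousEpi (R.map t) := by
  haveI := adj.leftAdjoint_preservesColimits
  haveI : L.PreservesEpimorphisms := inferInstance
  haveI : R.PreservesEpimorphisms := inferInstance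
  obtain ⟨h1, h2⟩ := ht
  refine ⟨R.map_epi t, fun X k hk => ?_⟩
  have hnat : L.map (R.map t) ≫ adj.counit.app C = adj.counit.app P ≫ t := by
    have := adj.counit.naturality t
    simp only [Functor.comp_map, Functor.id_map] at this
    exact this
  have key : (L.map k ≫ adj.counit.app P) ≫ t = L.map (k ≫ R.map t) ≫ adj.counit.app C := by
    rw [L.map_comp, Category.assoc, Category.assoc, hnat]
  haveI : Epi (L.map (k ≫ R.map t)) := L.map_epi _
  have hE : Epi ((L.map k ≫ adj.counit.app P) ≫ t) := by rw [key]; exact epi_comp _ _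
  have hh : Epi (L.map k ≫ adj.counit.app P) := h2 _ hE
  haveI : Epi (R.map (L.map k ≫ adj.counit.app P)) := R.map_epi _
  haveI : IsIso (R.map (adj.counit.app P)) := by
    have h3 : IsIso (adj.unit.app (R.obj P)) := inferInstance
    have h4 : IsIso (𝟙 (R.obj P)) := inferInstance
    exact IsIso.of_isIso_fac_left (adj.right_triangle_components P)
  have hRL : Epi (R.map (L.map k)) := by
    have : Epi (R.map (L.map k ≫ adj.counit.app P) ≫ inv (R.map (adj.counit.app P))) :=
      epi_comp _ _
    simpa [R.map_comp] using this
  have hnat2 : k ≫ adj.unit.app (R.obj P) = adj.unit.app X ≫ R.map (L.map k) := by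
    have := adj.unit.naturality k
    simp only [Functor.comp_map, Functor.id_map] at this
    exact this
  have : Epi (k ≫ adj.unit.app (R.obj P)) := by
    rw [hnat2]; exact @epi_comp _ _ _ _ _ _ _ _ hRL
  have : Epi ((k ≫ adj.unit.app (R.obj P)) ≫ inv (adj.unit.app (R.obj P))) := epi_comp _ _
  simpa using this
lemma counit_iso_of_iso' (L : A ⥤ B) (R : B ⥤ A) (adj : L ⊣ R) [L.Full] [L.Faithful]
    {Y : B} {X : A} (φ : Y ≅ L.obj X) : IsIso (adj.counit.app Y) := by
  have h := adj.counit.naturality φ.hom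
  simp only [Functor.comp_map, Functor.id_map] at h
  have h1 : IsIso (𝟙 (L.obj X)) := inferInstance
  have h2 : IsIso (L.map (adj.unit.app X)) := inferInstance
  haveI : IsIso (adj.counit.app (L.obj X)) :=
    IsIso.of_isIso_fac_left (adj.left_triangle_components X)
  have : adj.counit.app Y = L.map (R.map φ.hom) ≫ adj.counit.app (L.obj X) ≫ φ.inv := by
    rw [← Category.assoc, h]; simp
  rw [this]; infer_instance

end AuxDual

theorem dualCSRickart_iff_L_dualCSRickart
    {A : Type u} [Category.{v} A] [Abelian A] {B : Type u₂} [Category.{v₂} B] [Abelian B]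
    (L : A ⥤ B) (R : B ⥤ A) (adj : L ⊣ R)
    [PreservesFiniteLimits R] [PreservesFiniteColimits R] [L.Full] [L.Faithful]
    (M N : A) :
    DualCSRickart M N ↔ DualCSRickart (L.obj M) (L.obj N) := by
  haveI := adj.leftAdjoint_preservesColimits
  constructor
  · intro hd g
    obtain ⟨f, rfl⟩ : ∃ f : M ⟶ N, L.map f = g := ⟨L.preimage g, L.map_preimage g⟩
    obtain ⟨P, r, t, ⟨sec, hsec⟩, hts, hrt⟩ := hd f
    haveI : IsIso (cokernelComparison f L) := inferInstance
    refine ⟨L.obj P, L.map r, L.map t ≫ inv (cokernelComparison f L),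
      ⟨L.map sec, by rw [← L.map_comp, hsec, L.map_id]⟩,
      superfluous_comp_iso' _ (superfluous_L_map' L R adj hts), ?_⟩
    rw [← Category.assoc, ← L.map_comp, hrt, IsIso.comp_inv_eq, π_comp_cokernelComparison]
  · intro hd f
    obtain ⟨P, r, t, ⟨sec, hsec⟩, hts, hrt⟩ := hd (L.map f)
    haveI : IsIso (cokernelComparison f L) := inferInstance
    haveI : IsIso (cokernelComparison (L.map f) R) := inferInstance
    haveI : IsIso (adj.counit.app (cokernel (L.map f))) :=
      counit_iso_of_iso' L R adj (asIso (cokernelComparison f L))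
    have w : R.map (L.map f) ≫ inv (adj.unit.app N) = inv (adj.unit.app M) ≫ f := by
      have hn := adj.unit.naturality f
      simp only [Functor.comp_map, Functor.id_map] at hn
      rw [IsIso.comp_inv_eq, Category.assoc, hn, IsIso.inv_hom_id_assoc]
    let c2 : cokernel (R.map (L.map f)) ≅ cokernel f :=
      cokernel.mapIso _ f (asIso (adj.unit.app M)).symm (asIso (adj.unit.app N)).symm w
    refine ⟨R.obj P, adj.unit.app N ≫ R.map r,
      R.map t ≫ inv (cokernelComparison (L.map f) R) ≫ c2.hom,
      ⟨R.map sec ≫ inv (adj.unit.app N), ?_⟩, ?_, ?_⟩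
    · rw [Category.assoc, IsIso.inv_hom_id_assoc, ← R.map_comp, hsec, R.map_id]
    · exact superfluous_comp_iso' _ (superfluous_R_map' L R adj hts)
    · rw [Category.assoc, ← R.map_comp_assoc, hrt, ← π_comp_cokernelComparison,
        Category.assoc, IsIso.hom_inv_id_assoc]
      show adj.unit.app N ≫ cokernel.π (R.map (L.map f)) ≫
        cokernel.map _ f (inv (adj.unit.app M)) (inv (adj.unit.app N)) w = cokernel.π f
      rw [cokernel.π_desc, IsIso.hom_inv_id_assoc]
end

section
/- Let (𝒜, ℬ, 𝒞) be a recollement of abelian categories with functors i : 𝒜 → ℬ, q, p : ℬ → 𝒜, e : ℬ → 𝒞, l, r : 𝒞 → ℬ. For objects M, N of 𝒞, N is M-CS-Rickart in 𝒞 if and only if r(N) is r(M)-CS-Rickart in ℬ. -/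
open CategoryTheory CategoryTheory.Limits

universe v u v₂ u₂

section AuxCS

variable {B : Type u} [Category.{v} B] [Abelian B]
variable {Cc : Type u} [Category.{v} Cc] [Abelian Cc]

/-- Precomposing an essential monomorphism with an isomorphism yields an essential
monomorphism. -/
lemma essentialMono_isoComp {C : Type u} [Category.{v} C] {X Y Z : C}
    (φ : X ⟶ Y) [IsIso φ] {m : Y ⟶ Z} (hm : EssentialMono m) :
    EssentialMono (φ ≫ m) := by
  haveI := hm.1
  refine ⟨mono_comp _ _, ?_⟩
  intro P h hcomp
  haveI := hcomp
  have eq1 : m ≫ h = inv φ ≫ ((φ ≫ m) ≫ h) := by simp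
  exact hm.2 h (by rw [eq1]; exact mono_comp _ _)

/-- If the unit of `e ⊣ r` is monic at `X`, then `e` preserves essentiality of monos
out of `X`. -/
lemma essentialMono_map_left {e : B ⥤ Cc} {r : Cc ⥤ B} (adj : e ⊣ r)
    [r.Full] [r.Faithful]
    [e.PreservesMonomorphisms] [r.PreservesMonomorphisms]
    {X Y : B} {m : X ⟶ Y} (hm : EssentialMono m) (hX : Mono (adj.unit.app X)) :
    EssentialMono (e.map m) := by
  haveI := hm.1
  refine ⟨e.map_mono m, ?_⟩
  intro P h hcomp
  haveI := hcomp
  have h1 : Mono (m ≫ (adj.unit.app Y ≫ r.map h)) := by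
    have eq1 : m ≫ (adj.unit.app Y ≫ r.map h)
        = adj.unit.app X ≫ r.map (e.map m ≫ h) := by
      have nat := adj.unit.naturality m
      simp only [Functor.id_map, Functor.comp_map] at nat
      rw [← Category.assoc, nat, Category.assoc, ← r.map_comp]
    rw [eq1]
    haveI : Mono (r.map (e.map m ≫ h)) := r.map_mono _
    haveI := hX
    exact mono_comp _ _
  have h2 : Mono (adj.unit.app Y ≫ r.map h) := hm.2 _ h1
  haveI := h2
  have h3 : Mono (e.map (adj.unit.app Y ≫ r.map h)) := e.map_mono _
  have key : e.map (adj.unit.app Y ≫ r.map h) ≫ adj.counit.app P = h := by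
    have := adj.counit.naturality h
    simp only [Functor.comp_map, Functor.id_map] at this
    rw [e.map_comp, Category.assoc, this]
    simp
  haveI := h3
  haveI : Mono (adj.counit.app P) := inferInstance
  rw [← key]
  exact mono_comp _ _

/-- For an adjunction `e ⊣ r` with `r` fully faithful and `e` preserving kernels,
`r` preserves essential monomorphisms. -/
lemma essentialMono_map_right {e : B ⥤ Cc} {r : Cc ⥤ B} (adj : e ⊣ r)
    [r.Full] [r.Faithful]
    [e.PreservesMonomorphisms] [r.PreservesMonomorphisms]
    [PreservesLimitsOfSize.{0, 0} e] [e.PreservesZeroMorphisms]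
    [r.PreservesZeroMorphisms]
    {X Y : Cc} {m : X ⟶ Y} (hm : EssentialMono m) :
    EssentialMono (r.map m) := by
  haveI := hm.1
  refine ⟨r.map_mono m, ?_⟩
  intro P h hcomp
  haveI := hcomp
  -- Step 1: `e.map h` is a monomorphism.
  have nat : e.map (r.map m) ≫ adj.counit.app Y = adj.counit.app X ≫ m := by
    have := adj.counit.naturality m
    simpa [Functor.comp_map] using this
  have h1 : Mono (m ≫ (inv (adj.counit.app Y) ≫ e.map h)) := by
    have eq1 : m ≫ (inv (adj.counit.app Y) ≫ e.map h)
        = inv (adj.counit.app X) ≫ e.map (r.map m ≫ h) := by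
      rw [e.map_comp, ← Category.assoc, ← Category.assoc]
      congr 1
      rw [IsIso.comp_inv_eq, Category.assoc, nat, IsIso.inv_hom_id_assoc]
    rw [eq1]
    haveI : Mono (e.map (r.map m ≫ h)) := e.map_mono _
    exact mono_comp _ _
  have h2 : Mono (inv (adj.counit.app Y) ≫ e.map h) := hm.2 _ h1
  have h3 : Mono (e.map h) := by
    haveI := h2
    have : e.map h = adj.counit.app Y ≫ (inv (adj.counit.app Y) ≫ e.map h) := by simp
    rw [this]
    exact mono_comp _ _
  -- Step 2: the kernel of `h` maps to zero under `e`, hence embeds into `r.obj Y`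
  -- through the adjunction, so it is zero.
  haveI := h3
  apply Abelian.mono_of_kernel_ι_eq_zero
  have hz : IsZero (e.obj (kernel h)) :=
    IsZero.of_iso (isZero_zero Cc)
      ((PreservesKernel.iso e h) ≪≫ kernel.ofMono (e.map h))
  have : kernel.ι h = (adj.homEquiv _ _) ((adj.homEquiv _ _).symm (kernel.ι h)) := by
    simp
  rw [this, hz.eq_of_src ((adj.homEquiv _ _).symm (kernel.ι h)) 0]
  rw [Adjunction.homEquiv_unit, r.map_zero, comp_zero]

end AuxCS

theorem csRickart_iff_r_csRickart_of_recollement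
    {A : Type u} [Category.{v} A] [Abelian A]
    {B : Type u} [Category.{v} B] [Abelian B]
    {Cc : Type u} [Category.{v} Cc] [Abelian Cc]
    (i : A ⥤ B) (q p : B ⥤ A) (e : B ⥤ Cc) (l r : Cc ⥤ B)
    (adj_le : l ⊣ e) (adj_er : e ⊣ r) (adj_qi : q ⊣ i) (adj_ip : i ⊣ p)
    [i.Full] [i.Faithful] [l.Full] [l.Faithful] [r.Full] [r.Faithful]
    (him : ∀ X : B, i.essImage X ↔ IsZero (e.obj X))
    (M N : Cc) :
    CSRickart M N ↔ CSRickart (r.obj M) (r.obj N) := by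
  haveI : PreservesLimitsOfSize.{0, 0} r := adj_er.rightAdjoint_preservesLimits
  haveI : PreservesLimitsOfSize.{0, 0} e := adj_le.rightAdjoint_preservesLimits
  haveI : e.PreservesMonomorphisms := Functor.preservesMonomorphisms_of_adjunction adj_le
  haveI : r.PreservesMonomorphisms := Functor.preservesMonomorphisms_of_adjunction adj_er
  haveI : r.IsRightAdjoint := adj_er.isRightAdjoint
  haveI : e.IsRightAdjoint := adj_le.isRightAdjoint
  constructor
  · -- forward direction
    intro hCS g
    obtain ⟨f, rfl⟩ := r.map_surjective g
    obtain ⟨L, e', s, hess, ⟨retr, hretr⟩, hcomp⟩ := hCS f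
    refine ⟨r.obj L, (PreservesKernel.iso r f).inv ≫ r.map e', r.map s, ?_,
      ⟨r.map retr, by rw [← r.map_comp, hretr, r.map_id]⟩, ?_⟩
    · exact essentialMono_isoComp _ (essentialMono_map_right adj_er hess)
    · rw [Category.assoc, ← r.map_comp, hcomp, ← kernelComparison_comp_ι f r,
        ← PreservesKernel.iso_hom, Iso.inv_hom_id_assoc]
  · -- backward direction
    intro hCS f
    obtain ⟨L, e', s, hess, ⟨retr, hretr⟩, hcomp⟩ := hCS (r.map f)
    have nat : e.map (r.map f) ≫ adj_er.counit.app N = adj_er.counit.app M ≫ f := by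
      have := adj_er.counit.naturality f
      simpa [Functor.comp_map] using this
    have w : f ≫ (asIso (adj_er.counit.app N)).symm.hom
        = (asIso (adj_er.counit.app M)).symm.hom ≫ e.map (r.map f) := by
      simp only [asIso, Iso.symm_mk]
      rw [IsIso.comp_inv_eq, Category.assoc, nat, IsIso.inv_hom_id_assoc]
    -- iso from kernel f to kernel (e.map (r.map f))
    let χ : kernel f ≅ kernel (e.map (r.map f)) :=
      kernel.mapIso f (e.map (r.map f)) (asIso (adj_er.counit.app M)).symm
        (asIso (adj_er.counit.app N)).symm w
    refine ⟨e.obj L, (χ.hom ≫ (PreservesKernel.iso e (r.map f)).inv) ≫ e.map e',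
      e.map s ≫ adj_er.counit.app M, ?_, ?_, ?_⟩
    · -- essentiality
      have hmonounit : Mono (adj_er.unit.app (kernel (r.map f))) := by
        let μ : kernel (r.map f) ≅ r.obj (kernel f) := (PreservesKernel.iso r f).symm
        haveI : IsSplitMono (adj_er.unit.app (r.obj (kernel f))) :=
          IsSplitMono.mk'
            ⟨r.map (adj_er.counit.app (kernel f)), adj_er.right_triangle_components _⟩
        have eq1 : adj_er.unit.app (kernel (r.map f))
            = μ.hom ≫ adj_er.unit.app (r.obj (kernel f)) ≫ (e ⋙ r).map μ.inv := by
          have nat2 := adj_er.unit.naturality μ.hom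
          simp only [Functor.id_map] at nat2
          rw [← Category.assoc, nat2, Category.assoc, ← Functor.map_comp,
            Iso.hom_inv_id]
          simp
        rw [eq1]
        haveI : Mono ((e ⋙ r).map μ.inv) := inferInstance
        haveI : Mono (adj_er.unit.app (r.obj (kernel f)) ≫ (e ⋙ r).map μ.inv) :=
          mono_comp _ _
        exact mono_comp _ _
      exact essentialMono_isoComp _ (essentialMono_map_left adj_er hess hmonounit)
    · -- section
      refine ⟨inv (adj_er.counit.app M) ≫ e.map retr, ?_⟩
      rw [Category.assoc, IsIso.hom_inv_id_assoc, ← e.map_comp, hretr, e.map_id]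
    · -- compatibility with the kernel inclusion
      simp only [Category.assoc]
      rw [← Functor.map_comp_assoc, hcomp, ← kernelComparison_comp_ι (r.map f) e,
        ← PreservesKernel.iso_hom]
      simp only [Category.assoc]
      rw [Iso.inv_hom_id_assoc, ← Category.assoc]
      have hχ : χ.hom ≫ kernel.ι (e.map (r.map f))
          = kernel.ι f ≫ inv (adj_er.counit.app M) := by
        simp [χ, kernel.mapIso]
      rw [hχ, Category.assoc, IsIso.inv_hom_id, Category.comp_id]
end

section
/- In an adjoint triple (l, e, r) of covariant functors between abelian categories (l ⊣ e ⊣ r, with e : ℬ₁ → ℬ₂ and l, r : ℬ₂ → ℬ₁) where r (equivalently l) is fully faithful, for objects M, N of ℬ₂: N is dual M-CS-Rickart in ℬ₂ if and only if l(N) is dual l(M)-CS-Rickart in ℬ₁. -/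
open CategoryTheory CategoryTheory.Limits

universe v u v₂ u₂

section AuxSup

lemma superfluousEpi_comp_iso {C : Type u} [Category.{v} C] {M N P : C}
    (t : M ⟶ N) (i : N ⟶ P) [IsIso i] (ht : SuperfluousEpi t) :
    SuperfluousEpi (t ≫ i) := by
  obtain ⟨ht1, ht2⟩ := ht
  refine ⟨epi_comp _ _, fun Q h hh => ?_⟩
  have h1 : Epi (h ≫ t) := by
    rw [← Category.assoc] at hh
    haveI := hh
    have := epi_comp ((h ≫ t) ≫ i) (inv i)
    simpa using this
  exact ht2 h h1

variable {B₁ : Type u} [Category.{v} B₁] {B₂ : Type u₂} [Category.{v₂} B₂]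
  (e : B₁ ⥤ B₂) (l : B₂ ⥤ B₁) (adj : l ⊣ e)

lemma superfluous_map_l [l.Full] [l.Faithful]
    [e.PreservesEpimorphisms] [l.PreservesEpimorphisms]
    {P C : B₂} {t : P ⟶ C} (ht : SuperfluousEpi t) [IsIso adj.unit] :
    SuperfluousEpi (l.map t) := by
  obtain ⟨ht1, ht2⟩ := ht
  refine ⟨l.map_epi t, fun Q h hh => ?_⟩
  haveI := hh
  have h1 : Epi (e.map h ≫ e.map (l.map t)) := by
    rw [← e.map_comp]; exact e.map_epi _
  have nat : t ≫ adj.unit.app C = adj.unit.app P ≫ e.map (l.map t) := by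
    simpa using adj.unit.naturality t
  have inat : inv (adj.unit.app P) ≫ t = e.map (l.map t) ≫ inv (adj.unit.app C) := by
    rw [IsIso.inv_comp_eq, ← Category.assoc, ← nat, Category.assoc, IsIso.hom_inv_id,
      Category.comp_id]
  have h2 : Epi ((e.map h ≫ inv (adj.unit.app P)) ≫ t) := by
    rw [Category.assoc, inat, ← Category.assoc]
    haveI := h1
    exact epi_comp _ _
  have h3 : Epi (e.map h ≫ inv (adj.unit.app P)) := ht2 _ h2
  have h4 : Epi (e.map h) := by
    haveI := h3
    have := epi_comp (e.map h ≫ inv (adj.unit.app P)) (adj.unit.app P)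
    simpa using this
  haveI := h4
  have h5 : Epi (l.map (e.map h)) := l.map_epi _
  have cnat : l.map (e.map h) ≫ adj.counit.app (l.obj P) = adj.counit.app Q ≫ h := by
    simpa using adj.counit.naturality h
  have h6 : Epi (adj.counit.app Q ≫ h) := by
    rw [← cnat]
    haveI := h5
    exact epi_comp _ _
  haveI := h6
  exact epi_of_epi (adj.counit.app Q) h

lemma superfluous_map_e [l.Full] [l.Faithful]
    [e.PreservesEpimorphisms] [l.PreservesEpimorphisms]
    {P₁ C₁ : B₁} {t₁ : P₁ ⟶ C₁} (ht : SuperfluousEpi t₁) [IsIso adj.unit]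
    (hC : IsIso (adj.counit.app C₁)) :
    SuperfluousEpi (e.map t₁) := by
  obtain ⟨ht1, ht2⟩ := ht
  refine ⟨e.map_epi t₁, fun Q h hh => ?_⟩
  haveI := hh
  have h1 : Epi (l.map h ≫ l.map (e.map t₁)) := by
    rw [← l.map_comp]; exact l.map_epi _
  have cnat : l.map (e.map t₁) ≫ adj.counit.app C₁ = adj.counit.app P₁ ≫ t₁ := by
    simpa using adj.counit.naturality t₁
  have h2 : Epi ((l.map h ≫ adj.counit.app P₁) ≫ t₁) := by
    rw [Category.assoc, ← cnat, ← Category.assoc]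
    haveI := h1
    exact epi_comp _ _
  have h3 : Epi (l.map h ≫ adj.counit.app P₁) := ht2 _ h2
  have h4 : Epi (e.map (l.map h) ≫ e.map (adj.counit.app P₁)) := by
    rw [← e.map_comp]
    haveI := h3
    exact e.map_epi _
  have h5 : Epi (e.map (l.map h)) := by
    haveI := h4
    have := epi_comp (e.map (l.map h) ≫ e.map (adj.counit.app P₁))
      (inv (e.map (adj.counit.app P₁)))
    simpa using this
  have unat : h ≫ adj.unit.app (e.obj P₁) = adj.unit.app Q ≫ e.map (l.map h) := by
    simpa using adj.unit.naturality h
  have h6 : Epi (h ≫ adj.unit.app (e.obj P₁)) := by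
    rw [unat]
    haveI := h5
    exact epi_comp _ _
  haveI := h6
  have := epi_comp (h ≫ adj.unit.app (e.obj P₁)) (inv (adj.unit.app (e.obj P₁)))
  simpa using this

end AuxSup

theorem dualCSRickart_iff_l_dualCSRickart_of_triple
    {B₁ : Type u} [Category.{v} B₁] [Abelian B₁]
    {B₂ : Type u₂} [Category.{v₂} B₂] [Abelian B₂]
    (e : B₁ ⥤ B₂) (l r : B₂ ⥤ B₁)
    (adj_le : l ⊣ e) (adj_er : e ⊣ r)
    [r.Full] [r.Faithful]
    (M N : B₂) :
    DualCSRickart M N ↔ DualCSRickart (l.obj M) (l.obj N) := by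
  haveI : IsIso adj_le.unit := (Adjunction.Triple.mk adj_le adj_er).isIso_unit_iff_isIso_counit.mpr inferInstance
  have hffL : l.FullyFaithful := adj_le.fullyFaithfulLOfIsIsoUnit
  haveI := hffL.full
  haveI := hffL.faithful
  haveI : PreservesColimitsOfSize.{0, 0} l := adj_le.leftAdjoint_preservesColimits
  haveI : PreservesColimitsOfSize.{0, 0} e := adj_er.leftAdjoint_preservesColimits
  constructor
  · intro hN g
    obtain ⟨f, rfl⟩ := l.map_surjective g
    obtain ⟨P, r', t, ⟨sec, hsec⟩, hsup, hcomp⟩ := hN f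
    refine ⟨l.obj P, l.map r', l.map t ≫ inv (cokernelComparison f l),
      ⟨l.map sec, by rw [← l.map_comp, hsec, l.map_id]⟩,
      superfluousEpi_comp_iso _ _ (superfluous_map_l e l adj_le hsup), ?_⟩
    rw [← Category.assoc, ← l.map_comp, hcomp, IsIso.comp_inv_eq]
    exact (π_comp_cokernelComparison f l).symm
  · intro hN f
    obtain ⟨P₁, r₁, t₁, ⟨sec₁, hsec₁⟩, hsup₁, hcomp₁⟩ := hN (l.map f)
    have w : e.map (l.map f) ≫ inv (adj_le.unit.app N) = inv (adj_le.unit.app M) ≫ f := by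
      have nat : f ≫ adj_le.unit.app N = adj_le.unit.app M ≫ e.map (l.map f) := by
        simpa using adj_le.unit.naturality f
      rw [IsIso.comp_inv_eq, Category.assoc, nat, IsIso.inv_hom_id_assoc]
    let κ : cokernel (e.map (l.map f)) ⟶ cokernel f :=
      cokernel.map (e.map (l.map f)) f (inv (adj_le.unit.app M)) (inv (adj_le.unit.app N)) w
    haveI : IsIso κ :=
      (inferInstance : IsIso ((cokernel.mapIso (e.map (l.map f)) f
        (asIso (adj_le.unit.app M)).symm (asIso (adj_le.unit.app N)).symm w).hom))
    haveI : IsIso (inv (cokernelComparison (l.map f) e) ≫ κ) := inferInstance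
    have hC : IsIso (adj_le.counit.app (cokernel (l.map f))) :=
      adj_le.isIso_counit_app_of_iso (asIso (cokernelComparison f l))
    refine ⟨e.obj P₁, adj_le.unit.app N ≫ e.map r₁,
      e.map t₁ ≫ (inv (cokernelComparison (l.map f) e) ≫ κ),
      ⟨e.map sec₁ ≫ inv (adj_le.unit.app N), ?_⟩,
      superfluousEpi_comp_iso _ _ (superfluous_map_e e l adj_le hsup₁ hC), ?_⟩
    · rw [Category.assoc, IsIso.inv_hom_id_assoc, ← e.map_comp, hsec₁, e.map_id]
    · have step1 : e.map r₁ ≫ e.map t₁ = e.map (cokernel.π (l.map f)) := by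
        rw [← e.map_comp, hcomp₁]
      have step2 : e.map (cokernel.π (l.map f)) ≫ inv (cokernelComparison (l.map f) e) =
          cokernel.π (e.map (l.map f)) := by
        rw [IsIso.comp_inv_eq, π_comp_cokernelComparison]
      have step3 : cokernel.π (e.map (l.map f)) ≫ κ = inv (adj_le.unit.app N) ≫ cokernel.π f :=
        cokernel.π_desc _ _ _
      calc (adj_le.unit.app N ≫ e.map r₁) ≫
            e.map t₁ ≫ (inv (cokernelComparison (l.map f) e) ≫ κ)
          = adj_le.unit.app N ≫ (e.map r₁ ≫ e.map t₁) ≫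
            inv (cokernelComparison (l.map f) e) ≫ κ := by simp only [Category.assoc]
        _ = adj_le.unit.app N ≫ (cokernel.π (e.map (l.map f)) ≫ κ) := by
            rw [step1, ← step2]; simp only [Category.assoc]
        _ = cokernel.π f := by rw [step3, IsIso.hom_inv_id_assoc]
end

section
/- The class of im-local-retractable right R-modules is closed under direct summands: if M is im-local-retractable and N is a direct summand of M, then N is im-local-retractable. -/
universe u

/-- A module `M` is im-local-retractable if for every injective `R`-linear map
`k : K → M` and every `x ∈ K`, there is `h : M → K` with `x ∈ Im(h ∘ k)`. -/
def ImLocalRetractable (R : Type u) (M : Type u) [Ring R] [AddCommGroup M]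
    [Module R M] : Prop :=
  ∀ ⦃K : Type u⦄ [AddCommGroup K] [Module R K] (k : K →ₗ[R] M),
    Function.Injective k → ∀ x : K, ∃ h : M →ₗ[R] K, x ∈ LinearMap.range (h.comp k)

theorem imLocalRetractable_of_directSummand (R : Type u) [Ring R]
    (M N : Type u) [AddCommGroup M] [Module R M] [AddCommGroup N] [Module R N]
    (hM : ImLocalRetractable R M)
    (i : N →ₗ[R] M) (π : M →ₗ[R] N) (hπi : π.comp i = LinearMap.id) :
    ImLocalRetractable R N := by
  intro K _ _ k hk x
  have hi : Function.Injective i := by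
    intro a b hab
    have h1 : π (i a) = a := LinearMap.congr_fun hπi a
    have h2 : π (i b) = b := LinearMap.congr_fun hπi b
    rw [← h1, ← h2, hab]
  obtain ⟨h, y, hy⟩ := hM (i.comp k) (hi.comp hk) x
  exact ⟨h.comp i, y, by simpa using hy⟩
end
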